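/- Let Z be a nonnegative random variable on a probability space, and let C > 0, λ > 0, v ≥ 1 and M > 0 be real numbers, with m := ⌈v/2 − 1⌉ (a natural number). If P(Z > x) ≤ C·exp(−λ x²) for all x > 0, then E[Z^v · 1{Z > M}] ≤ C · M^v · exp(−λ M²) · (1 + (v/2) Σ_{j=0}^{m} (m!/j!) · (λ M²)^{−(m+1−j)}). -/

import Mathlib

open MeasureTheory

open Real Set Finset in
noncomputable def cgam (m : ℕ) (lam : ℝ) (j : ℕ) : ℝ :=
  (m.factorial : ℝ) / j.factorial * (lam ^ (m+1-j))⁻¹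

lemma cgam_succ (m : ℕ) (lam : ℝ) (hlam : 0 < lam) {j : ℕ} (hj : j < m) :
    cgam m lam (j+1) * (j+1) = lam * cgam m lam j := by
  unfold cgam
  have h1 : m + 1 - (j+1) = m - j := by omega
  have h2 : m + 1 - j = (m - j) + 1 := by omega
  rw [h1, h2, pow_succ]
  have : ((j+1).factorial : ℝ) = (j.factorial : ℝ) * (j+1) := by
    rw [Nat.factorial_succ]; push_cast; ring
  rw [this]
  have hj1 : ((j:ℝ)+1) ≠ 0 := by positivity
  have hjf : (j.factorial : ℝ) ≠ 0 := by positivity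
  field_simp

lemma hasDerivAt_G (m : ℕ) (lam : ℝ) (hlam : 0 < lam) (x : ℝ) :
    HasDerivAt (fun x : ℝ => -(Real.exp (-lam * x^2) *
        ∑ j ∈ Finset.range (m+1), cgam m lam j * x^(2*j)) / 2)
      (x^(2*m+1) * Real.exp (-lam * x^2)) x := by
  have hE : HasDerivAt (fun x : ℝ => Real.exp (-lam * x^2))
      (Real.exp (-lam * x^2) * (-lam * (2 * x^1))) x :=
    ((hasDerivAt_pow 2 x).const_mul (-lam)).exp
  have hS : HasDerivAt (fun x : ℝ => ∑ j ∈ Finset.range (m+1), cgam m lam j * x^(2*j))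
      (∑ j ∈ Finset.range (m+1), cgam m lam j * ((2*j : ℕ) * x^(2*j-1))) x := by
    refine HasDerivAt.fun_sum fun j _ => ?_
    simpa using (hasDerivAt_pow (2*j) x).const_mul (cgam m lam j)
  have h := ((hE.fun_mul hS).fun_neg).div_const 2
  refine h.congr_deriv (Eq.symm ?_)
  have key : 2 * lam * x * (∑ j ∈ Finset.range (m+1), cgam m lam j * x^(2*j))
      - ∑ j ∈ Finset.range (m+1), cgam m lam j * ((2*j : ℕ) * x^(2*j-1))
      = 2 * x^(2*m+1) := by
    rw [Finset.mul_sum, Finset.sum_range_succ, Finset.sum_range_succ']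
    have hterm : ∀ j ∈ Finset.range m,
        cgam m lam (j+1) * ((2*(j+1) : ℕ) * x^(2*(j+1)-1))
          = 2 * lam * x * (cgam m lam j * x^(2*j)) := by
      intro j hj
      have hjm : j < m := Finset.mem_range.mp hj
      have hcc := cgam_succ m lam hlam hjm
      have hxp : x^(2*(j+1)-1) = x^(2*j) * x := by
        have : 2*(j+1)-1 = 2*j+1 := by omega
        rw [this, pow_succ]
      rw [hxp]
      push_cast
      linear_combination (2 * (x^(2*j) * x)) * hcc
    rw [Finset.sum_congr rfl hterm]
    have hcm : cgam m lam m = lam⁻¹ := by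
      unfold cgam
      have : m + 1 - m = 1 := by omega
      rw [this, div_self (by positivity : ((m.factorial : ℝ)) ≠ 0)]; simp
    rw [hcm]
    have hxm : x^(2*m+1) = x^(2*m) * x := pow_succ x (2*m)
    rw [hxm]
    push_cast
    field_simp
    ring
  set S1 := ∑ j ∈ Finset.range (m+1), cgam m lam j * x^(2*j) with hS1
  set S2 := ∑ j ∈ Finset.range (m+1), cgam m lam j * ((2*j : ℕ) * x^(2*j-1)) with hS2
  linear_combination (-Real.exp (-lam * x^2) / 2) * key

lemma tendsto_G (m : ℕ) (lam : ℝ) (hlam : 0 < lam) :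
    Filter.Tendsto (fun x : ℝ => -(Real.exp (-lam * x^2) *
        ∑ j ∈ Finset.range (m+1), cgam m lam j * x^(2*j)) / 2) Filter.atTop (nhds 0) := by
  have hsq : Filter.Tendsto (fun x : ℝ => x^2) Filter.atTop Filter.atTop :=
    Filter.tendsto_pow_atTop (by norm_num)
  have hlin : Filter.Tendsto (fun u : ℝ => lam * u) Filter.atTop Filter.atTop :=
    Filter.Tendsto.const_mul_atTop hlam Filter.tendsto_id
  have h1 : ∀ j : ℕ, Filter.Tendsto (fun x : ℝ => cgam m lam j * x^(2*j) *
      Real.exp (-lam * x^2)) Filter.atTop (nhds 0) := by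
    intro j
    have hg : Filter.Tendsto (fun t : ℝ => t^j * Real.exp (-t)) Filter.atTop (nhds 0) :=
      Real.tendsto_pow_mul_exp_neg_atTop_nhds_zero j
    have h2 : Filter.Tendsto (fun u : ℝ => (lam*u)^j * Real.exp (-(lam*u)))
        Filter.atTop (nhds 0) := hg.comp hlin
    have h3 : Filter.Tendsto (fun u : ℝ => cgam m lam j * (lam : ℝ)⁻¹^j *
        ((lam*u)^j * Real.exp (-(lam*u)))) Filter.atTop (nhds 0) := by
      simpa using h2.const_mul (cgam m lam j * (lam : ℝ)⁻¹^j)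
    have h4 := h3.comp hsq
    convert h4 using 2 with x
    simp only [Function.comp]
    rw [mul_pow, ← pow_mul]
    field_simp
    rw [mul_assoc _ ((1 / lam) ^ j), ← mul_pow, one_div, inv_mul_cancel₀ hlam.ne', one_pow, mul_one]
  have hsum := Filter.Tendsto.div_const (Filter.Tendsto.neg
    (tendsto_finset_sum (Finset.range (m+1)) (fun j _ => h1 j))) 2
  simp only [Finset.sum_const_zero, neg_zero, zero_div] at hsum
  convert hsum using 2 with x
  · rw [Finset.mul_sum]
    congr 1
    rw [neg_inj]
    exact Finset.sum_congr rfl (fun j _ => by ring)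

lemma gauss_integrableOn (m : ℕ) (lam A : ℝ) (hlam : 0 < lam) (hA : 0 ≤ A) :
    IntegrableOn (fun x : ℝ => x^(2*m+1) * Real.exp (-lam * x^2)) (Set.Ioi A) := by
  refine integrableOn_Ioi_deriv_of_nonneg' (g := fun x : ℝ => -(Real.exp (-lam * x^2) *
        ∑ j ∈ Finset.range (m+1), cgam m lam j * x^(2*j)) / 2)
    (fun x _ => hasDerivAt_G m lam hlam x) (fun x hx => ?_) (tendsto_G m lam hlam)
  have hx0 : 0 < x := lt_of_le_of_lt hA hx
  positivity

lemma gauss_integral (m : ℕ) (lam A : ℝ) (hlam : 0 < lam) (hA : 0 ≤ A) :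
    ∫ x in Set.Ioi A, x^(2*m+1) * Real.exp (-lam * x^2)
      = (Real.exp (-lam * A^2) * ∑ j ∈ Finset.range (m+1), cgam m lam j * A^(2*j)) / 2 := by
  rw [integral_Ioi_of_hasDerivAt_of_nonneg' (fun x _ => hasDerivAt_G m lam hlam x)
    (fun x hx => by have hx0 : 0 < x := lt_of_le_of_lt hA hx; positivity)
    (tendsto_G m lam hlam)]
  ring


/-- Truncated moment bound (the quantity `Γ^π_T(v, M)`): if the nonnegative
random variable `Z` satisfies `P(Z > x) ≤ C exp(−λ x²)` for all `x > 0`, then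
with `m = ⌈v/2 − 1⌉`,
`E[Z^v 1{Z > M}] ≤ C M^v exp(−λ M²) (1 + (v/2) ∑_{j=0}^m (m!/j!) (λ M²)^{−(m+1−j)})`. -/
theorem subgaussian_truncated_moment_bound
    {Ω : Type*} [MeasurableSpace Ω] (P : Measure Ω) [IsProbabilityMeasure P]
    (Z : Ω → ℝ) (hZmeas : Measurable Z) (hZnn : ∀ ω, 0 ≤ Z ω)
    (C lam v M : ℝ) (hC : 0 < C) (hlam : 0 < lam) (hv : 1 ≤ v) (hM : 0 < M)
    (htail : ∀ x : ℝ, 0 < x →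
      P {ω | x < Z ω} ≤ ENNReal.ofReal (C * Real.exp (-lam * x ^ 2))) :
    ∫⁻ ω in {ω | M < Z ω}, ENNReal.ofReal (Z ω ^ v) ∂P ≤
      ENNReal.ofReal (C * M ^ v * Real.exp (-lam * M ^ 2) *
        (1 + (v / 2) * ∑ j ∈ Finset.range (⌈v / 2 - 1⌉₊ + 1),
          ((⌈v / 2 - 1⌉₊.factorial : ℝ) / (j.factorial : ℝ)) *
            ((lam * M ^ 2) ^ (⌈v / 2 - 1⌉₊ + 1 - j))⁻¹)) := by
  set m : ℕ := ⌈v / 2 - 1⌉₊ with hm_def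
  have hv0 : 0 < v := lt_of_lt_of_le one_pos hv
  have hmceil : v / 2 - 1 ≤ (m : ℝ) := Nat.le_ceil _
  have hexp_le : v - 1 ≤ 2 * (m : ℝ) + 1 := by linarith
  set s : Set Ω := {ω | M < Z ω} with hs_def
  have hs : MeasurableSet s := measurableSet_lt measurable_const hZmeas
  set Y : Ω → ℝ := s.indicator Z with hY_def
  have hYnn : ∀ ω, 0 ≤ Y ω := fun ω => Set.indicator_nonneg (fun a _ => hZnn a) ω
  have hYmeas : Measurable Y := hZmeas.indicator hs
  -- Step 1: LHS = ∫⁻ ofReal (Y ^ v)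
  have step1 : ∫⁻ ω in s, ENNReal.ofReal (Z ω ^ v) ∂P
      = ∫⁻ ω, ENNReal.ofReal (Y ω ^ v) ∂P := by
    rw [← lintegral_indicator hs]
    congr 1
    funext ω
    by_cases hω : ω ∈ s
    · rw [Set.indicator_of_mem hω, hY_def, Set.indicator_of_mem hω]
    · rw [Set.indicator_of_notMem hω, hY_def, Set.indicator_of_notMem hω,
        Real.zero_rpow hv0.ne', ENNReal.ofReal_zero]
  -- Step 2: layer cake
  have step2 : ∫⁻ ω, ENNReal.ofReal (Y ω ^ v) ∂P
      = ENNReal.ofReal v * ∫⁻ t in Set.Ioi (0:ℝ),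
          P {a | t < Y a} * ENNReal.ofReal (t ^ (v - 1)) :=
    lintegral_rpow_eq_lintegral_meas_lt_mul P
      (Filter.Eventually.of_forall hYnn) hYmeas.aemeasurable hv0
  -- Step 3: split domain
  have hsplit : Set.Ioi (0:ℝ) = Set.Ioc 0 M ∪ Set.Ioi M := (Set.Ioc_union_Ioi_eq_Ioi hM.le).symm
  have hdisj : Disjoint (Set.Ioc (0:ℝ) M) (Set.Ioi M) := Set.Ioc_disjoint_Ioi le_rfl
  have step3 : ∫⁻ t in Set.Ioi (0:ℝ), P {a | t < Y a} * ENNReal.ofReal (t ^ (v - 1))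
      = (∫⁻ t in Set.Ioc (0:ℝ) M, P {a | t < Y a} * ENNReal.ofReal (t ^ (v - 1)))
      + ∫⁻ t in Set.Ioi M, P {a | t < Y a} * ENNReal.ofReal (t ^ (v - 1)) := by
    rw [hsplit, lintegral_union measurableSet_Ioi hdisj]
  -- sets
  have hsetIoc : ∀ t : ℝ, t ∈ Set.Ioc (0:ℝ) M → {a | t < Y a} = s := by
    intro t ht
    ext a
    simp only [Set.mem_setOf_eq]
    by_cases ha : a ∈ s
    · simp only [hY_def, Set.indicator_of_mem ha]
      constructor
      · intro _; exact ha
      · intro _; exact lt_of_le_of_lt ht.2 ha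
    · simp only [hY_def, Set.indicator_of_notMem ha]
      constructor
      · intro h; exact absurd (lt_trans ht.1 h) (lt_irrefl 0)
      · intro h; exact absurd h ha
  have hsetIoi : ∀ t : ℝ, t ∈ Set.Ioi M → {a | t < Y a} = {a | t < Z a} := by
    intro t ht
    ext a
    simp only [Set.mem_setOf_eq]
    by_cases ha : a ∈ s
    · simp only [hY_def, Set.indicator_of_mem ha]
    · simp only [hY_def, Set.indicator_of_notMem ha]
      have haZ : Z a ≤ M := le_of_not_gt ha
      constructor
      · intro h; exact absurd (lt_trans (lt_trans hM ht) h) (lt_irrefl 0)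
      · intro h; exact absurd h (not_lt.mpr (haZ.trans (Set.mem_Ioi.mp ht).le))
  -- Piece 1
  have hI1 : ∫⁻ t in Set.Ioc (0:ℝ) M, ENNReal.ofReal (t ^ (v - 1))
      = ENNReal.ofReal (M ^ v / v) := by
    have hint : IntegrableOn (fun t : ℝ => t ^ (v - 1)) (Set.Ioc 0 M) :=
      (intervalIntegrable_iff_integrableOn_Ioc_of_le hM.le).mp
        (intervalIntegral.intervalIntegrable_rpow' (by linarith))
    have hnn : 0 ≤ᵐ[volume.restrict (Set.Ioc (0:ℝ) M)] fun t : ℝ => t ^ (v - 1) := by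
      rw [Filter.EventuallyLE, ae_restrict_iff' measurableSet_Ioc]
      exact Filter.Eventually.of_forall fun t ht => Real.rpow_nonneg ht.1.le _
    rw [← ofReal_integral_eq_lintegral_ofReal hint hnn]
    congr 1
    rw [← intervalIntegral.integral_of_le hM.le,
      integral_rpow (Or.inl (by linarith : (-1:ℝ) < v - 1))]
    have : v - 1 + 1 = v := by ring
    rw [this, Real.zero_rpow hv0.ne']
    ring
  have piece1 : ∫⁻ t in Set.Ioc (0:ℝ) M, P {a | t < Y a} * ENNReal.ofReal (t ^ (v - 1))
      = P s * ENNReal.ofReal (M ^ v / v) := by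
    rw [setLIntegral_congr_fun measurableSet_Ioc
      (fun t ht => by rw [hsetIoc t ht]),
      lintegral_const_mul' _ _ (measure_ne_top P s), hI1]
  -- Piece 2
  set Mr : ℝ := M ^ (v - 2 - 2*(m:ℝ)) with hMr_def
  have hMrpos : 0 < Mr := Real.rpow_pos_of_pos hM _
  set EM : ℝ := Real.exp (-lam * M ^ 2) with hEM_def
  set SM : ℝ := ∑ j ∈ Finset.range (m+1), cgam m lam j * M ^ (2*j) with hSM_def
  have hSMnn : 0 ≤ SM := by
    apply Finset.sum_nonneg
    intro j _
    have : 0 < cgam m lam j := by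
      unfold cgam
      positivity
    positivity
  have piece2 : ∫⁻ t in Set.Ioi M, P {a | t < Y a} * ENNReal.ofReal (t ^ (v - 1))
      ≤ ENNReal.ofReal (C * Mr * ((EM * SM) / 2)) := by
    rw [setLIntegral_congr_fun measurableSet_Ioi
      (fun t ht => by rw [hsetIoi t ht])]
    have hgmeas : Measurable fun t : ℝ =>
        ENNReal.ofReal (C * Mr * (t ^ (2*m+1) * Real.exp (-lam * t ^ 2))) := by
      apply Measurable.ennreal_ofReal
      exact (continuous_const.mul ((continuous_pow _).mul
        ((continuous_const.mul (continuous_pow 2)).rexp))).measurable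
    have hmono : ∀ t ∈ Set.Ioi M, P {a | t < Z a} * ENNReal.ofReal (t ^ (v - 1))
        ≤ ENNReal.ofReal (C * Mr * (t ^ (2*m+1) * Real.exp (-lam * t ^ 2))) := by
      intro t ht
      have htM : M < t := ht
      have ht0 : 0 < t := hM.trans htM
      calc P {a | t < Z a} * ENNReal.ofReal (t ^ (v - 1))
          ≤ ENNReal.ofReal (C * Real.exp (-lam * t ^ 2)) * ENNReal.ofReal (t ^ (v - 1)) :=
            mul_le_mul_left (htail t ht0) _
        _ = ENNReal.ofReal (C * Real.exp (-lam * t ^ 2) * t ^ (v - 1)) :=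
            (ENNReal.ofReal_mul (by positivity)).symm
        _ ≤ ENNReal.ofReal (C * Mr * (t ^ (2*m+1) * Real.exp (-lam * t ^ 2))) := by
            apply ENNReal.ofReal_le_ofReal
            have h1 : t ^ (v - 1) = t ^ ((2*(m:ℝ)+1)) * t ^ (v - 2 - 2*(m:ℝ)) := by
              rw [← Real.rpow_add ht0]
              congr 1
              ring
            have h2 : t ^ (v - 2 - 2*(m:ℝ)) ≤ Mr :=
              Real.rpow_le_rpow_of_nonpos hM htM.le (by linarith)
            have h3 : t ^ ((2*(m:ℝ)+1)) = t ^ (2*m+1) := by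
              rw [← Real.rpow_natCast t (2*m+1)]
              congr 1
              push_cast
              ring
            have h4 : t ^ (v-1) ≤ t ^ (2*m+1) * Mr := by
              rw [h1, h3]
              exact mul_le_mul_of_nonneg_left h2 (by positivity)
            have hCE : 0 ≤ C * Real.exp (-lam * t ^ 2) := by positivity
            calc C * Real.exp (-lam * t ^ 2) * t ^ (v-1)
                ≤ C * Real.exp (-lam * t ^ 2) * (t ^ (2*m+1) * Mr) :=
                  mul_le_mul_of_nonneg_left h4 hCE
              _ = C * Mr * (t ^ (2*m+1) * Real.exp (-lam * t ^ 2)) := by ring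
    calc ∫⁻ t in Set.Ioi M, P {a | t < Z a} * ENNReal.ofReal (t ^ (v - 1))
        ≤ ∫⁻ t in Set.Ioi M,
            ENNReal.ofReal (C * Mr * (t ^ (2*m+1) * Real.exp (-lam * t ^ 2))) :=
          setLIntegral_mono hgmeas hmono
      _ = ENNReal.ofReal (∫ t in Set.Ioi M, C * Mr * (t ^ (2*m+1) * Real.exp (-lam * t ^ 2))) := by
          rw [ofReal_integral_eq_lintegral_ofReal
            ((gauss_integrableOn m lam M hlam hM.le).const_mul (C * Mr))
            (by
              rw [Filter.EventuallyLE, ae_restrict_iff' measurableSet_Ioi]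
              refine Filter.Eventually.of_forall fun t ht => ?_
              have ht0 : 0 < t := hM.trans ht
              positivity)]
      _ = ENNReal.ofReal (C * Mr * ((EM * SM) / 2)) := by
          rw [integral_const_mul, gauss_integral m lam M hlam hM.le]
  -- termwise identity for the sum
  have hMrS : Mr * SM = M ^ v * ∑ j ∈ Finset.range (m+1),
      ((m.factorial : ℝ) / (j.factorial : ℝ)) * ((lam * M ^ 2) ^ (m + 1 - j))⁻¹ := by
    rw [hSM_def, Finset.mul_sum, Finset.mul_sum]
    refine Finset.sum_congr rfl fun j hj => ?_
    have hjm : j ≤ m := by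
      have := Finset.mem_range.mp hj; omega
    have key : Mr * M ^ (2*j) = M ^ v * ((M ^ 2) ^ (m + 1 - j))⁻¹ := by
      rw [← pow_mul, ← Real.rpow_natCast M (2*j), ← Real.rpow_natCast M (2*(m+1-j)),
        ← Real.rpow_neg hM.le, hMr_def, ← Real.rpow_add hM, ← Real.rpow_add hM]
      congr 1
      push_cast [Nat.cast_sub (by omega : j ≤ m + 1)]
      ring
    unfold cgam
    rw [mul_pow, mul_inv]
    linear_combination ((m.factorial : ℝ) / (j.factorial : ℝ) * ((lam ^ (m+1-j))⁻¹)) * key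
  -- final real identity
  have hfinal : v * ((C * EM) * (M ^ v / v)) + v * (C * Mr * ((EM * SM) / 2))
      = C * M ^ v * EM * (1 + (v / 2) * ∑ j ∈ Finset.range (m+1),
          ((m.factorial : ℝ) / (j.factorial : ℝ)) * ((lam * M ^ 2) ^ (m + 1 - j))⁻¹) := by
    have h1 : v * ((C * EM) * (M ^ v / v)) = C * EM * M ^ v := by
      field_simp
    rw [h1]
    linear_combination (v * C * EM / 2) * hMrS
  -- assemble
  have hMvnn : (0:ℝ) ≤ M ^ v / v := by positivity
  have hCEnn : (0:ℝ) ≤ C * EM := by positivity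
  calc ∫⁻ ω in s, ENNReal.ofReal (Z ω ^ v) ∂P
      = ENNReal.ofReal v * ((P s * ENNReal.ofReal (M ^ v / v))
        + ∫⁻ t in Set.Ioi M, P {a | t < Y a} * ENNReal.ofReal (t ^ (v - 1))) := by
        rw [step1, step2, step3, piece1]
    _ ≤ ENNReal.ofReal v * ((ENNReal.ofReal (C * EM) * ENNReal.ofReal (M ^ v / v))
        + ENNReal.ofReal (C * Mr * ((EM * SM) / 2))) := by
        apply mul_le_mul_right
        exact add_le_add (mul_le_mul_left (htail M hM) _) piece2
    _ = ENNReal.ofReal (v * ((C * EM) * (M ^ v / v) + C * Mr * ((EM * SM) / 2))) := by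
        rw [← ENNReal.ofReal_mul hCEnn, ← ENNReal.ofReal_add (by positivity) (by positivity),
          ← ENNReal.ofReal_mul hv0.le]
    _ ≤ _ := by
        apply ENNReal.ofReal_le_ofReal
        rw [mul_add, hfinal]
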